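/- Let p be a strictly positive probability vector in ℝ^k, let Ω(p) = diag(p) − p pᵀ, and let G be a real k×d matrix whose columns are linearly independent and whose column span does not contain the all-ones vector 1_k. Then the d×d matrix C = Gᵀ Ω(p) G is symmetric and positive definite. -/

import Mathlib

open Matrix

theorem gramian_of_omega_posDef (k d : ℕ) (p : Fin k → ℝ)
    (hpos : ∀ i, 0 < p i) (hsum : ∑ i, p i = 1)
    (G : Matrix (Fin k) (Fin d) ℝ)
    (hind : LinearIndependent ℝ (fun j : Fin d => fun i : Fin k => G i j))
    (hone : (fun _ => (1 : ℝ)) ∉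
      Submodule.span ℝ (Set.range (fun j : Fin d => fun i : Fin k => G i j))) :
    (G.transpose * (Matrix.diagonal p - Matrix.vecMulVec p p) * G).IsSymm ∧
    (G.transpose * (Matrix.diagonal p - Matrix.vecMulVec p p) * G).PosDef := by
  have hΩ : (Matrix.diagonal p - Matrix.vecMulVec p p).IsSymm := by
    unfold Matrix.IsSymm
    rw [transpose_sub, diagonal_transpose]
    congr 1
    ext i j
    simp [vecMulVec_apply, mul_comm]
  have hsymm : (G.transpose * (Matrix.diagonal p - Matrix.vecMulVec p p) * G).IsSymm := by
    unfold Matrix.IsSymm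
    rw [transpose_mul, transpose_mul, transpose_transpose, hΩ, Matrix.mul_assoc]
  have hherm : (G.transpose * (Matrix.diagonal p - Matrix.vecMulVec p p) * G).IsHermitian := by
    rw [Matrix.IsHermitian, conjTranspose_eq_transpose_of_trivial]
    exact hsymm
  refine ⟨hsymm, posDef_iff_dotProduct_mulVec.mpr ⟨hherm, ?_⟩⟩
  intro x hx
  set y : Fin k → ℝ := G *ᵥ x with hy
  set m : ℝ := p ⬝ᵥ y with hm
  have hm' : ∑ i, p i * y i = m := by rw [hm]; rfl
  have key : star x ⬝ᵥ (G.transpose * (Matrix.diagonal p - Matrix.vecMulVec p p) * G) *ᵥ x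
      = ∑ i, p i * (y i - m)^2 := by
    have h1 : star x ⬝ᵥ (G.transpose * (Matrix.diagonal p - Matrix.vecMulVec p p) * G) *ᵥ x
        = y ⬝ᵥ (Matrix.diagonal p - Matrix.vecMulVec p p) *ᵥ y := by
      rw [star_trivial, ← mulVec_mulVec, ← mulVec_mulVec, dotProduct_mulVec x,
        vecMul_transpose]
    have hdiag : y ⬝ᵥ Matrix.diagonal p *ᵥ y = ∑ i, p i * y i ^ 2 := by
      simp only [dotProduct, mulVec_diagonal]
      exact Finset.sum_congr rfl fun i _ => by ring
    have hvv : y ⬝ᵥ Matrix.vecMulVec p p *ᵥ y = m * m := by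
      simp only [dotProduct, mulVec, vecMulVec_apply, ← hm']
      rw [Finset.sum_mul]
      refine Finset.sum_congr rfl fun i _ => ?_
      rw [Finset.mul_sum, Finset.mul_sum]
      exact Finset.sum_congr rfl fun j _ => by ring
    have expand : ∀ i ∈ Finset.univ, p i * (y i - m)^2
        = p i * y i ^ 2 - 2 * m * (p i * y i) + m^2 * p i := fun i _ => by ring
    rw [h1, sub_mulVec, dotProduct_sub, hdiag, hvv, Finset.sum_congr rfl expand]
    rw [Finset.sum_add_distrib, Finset.sum_sub_distrib, ← Finset.mul_sum, ← Finset.mul_sum,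
      hsum, hm']
    ring
  rw [key]
  have hny : ∃ i, y i ≠ m := by
    by_contra h
    push_neg at h
    have hmem : y ∈ Submodule.span ℝ (Set.range fun j i => G i j) := by
      have hyeq : y = ∑ j, x j • (fun i => G i j) := by
        funext i
        simp only [hy, mulVec, dotProduct, Finset.sum_apply, Pi.smul_apply, smul_eq_mul]
        exact Finset.sum_congr rfl fun j _ => by ring
      rw [hyeq]
      exact Submodule.sum_mem _ fun j _ =>
        Submodule.smul_mem _ _ (Submodule.subset_span ⟨j, rfl⟩)
    rcases eq_or_ne m 0 with hm0 | hm0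
    · have hy0 : ∑ j, x j • (fun i : Fin k => G i j) = 0 := by
        have hyeq : y = ∑ j, x j • (fun i => G i j) := by
          funext i
          simp only [hy, mulVec, dotProduct, Finset.sum_apply, Pi.smul_apply, smul_eq_mul]
          exact Finset.sum_congr rfl fun j _ => by ring
        rw [← hyeq]
        funext i
        rw [h i, hm0]
        rfl
      exact hx (funext (Fintype.linearIndependent_iff.mp hind x hy0))
    · apply hone
      have h1 : (fun _ : Fin k => (1:ℝ)) = m⁻¹ • y := by
        funext i
        simp [h i, hm0]
      rw [h1]
      exact Submodule.smul_mem _ _ hmem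
  obtain ⟨i, hi⟩ := hny
  refine Finset.sum_pos' (fun j _ => ?_) ⟨i, Finset.mem_univ i, ?_⟩
  · exact mul_nonneg (hpos j).le (sq_nonneg _)
  · have hne : y i - m ≠ 0 := sub_ne_zero.mpr hi
    exact mul_pos (hpos i) (by positivity)
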